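/- For two one-qubit dephasing channels determined by complex numbers f, g with |f| ≤ 1, |g| ≤ 1, the superfidelity between their Jamiołkowski states equals 1/2 + (1/2)·Re(f·ḡ) + (1/2)·√(1-|f|²)·√(1-|g|²). -/

import Mathlib

open Matrix

noncomputable def sG {N : ℕ} (ρ σ : Matrix (Fin N) (Fin N) ℂ) : ℝ :=
  (trace (ρ * σ)).re +
    Real.sqrt (1 - (trace (ρ * ρ)).re) * Real.sqrt (1 - (trace (σ * σ)).re)

/-- Jamiołkowski state of the one-qubit dephasing channel D_f. -/
noncomputable def dephJam (f : ℂ) : Matrix (Fin 4) (Fin 4) ℂ :=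
  ((1 : ℂ) / 2) • !![1, 0, 0, f; 0, 0, 0, 0; 0, 0, 0, 0; star f, 0, 0, 1]

lemma tr_deph (f g : ℂ) :
    (trace (dephJam f * dephJam g)).re = 1/2 + (1/2) * (f * star g).re := by
  simp [dephJam, trace, diag, Fin.sum_univ_four, Matrix.mul_apply, Complex.add_re,
    Complex.mul_re, Complex.ext_iff]
  ring_nf

theorem superfidelity_dephasing (f g : ℂ)
    (hf : ‖f‖ ≤ 1) (hg : ‖g‖ ≤ 1) :
    sG (dephJam f) (dephJam g) =
      1 / 2 + (1 / 2) * (f * star g).re +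
        (1 / 2) * Real.sqrt (1 - ‖f‖ ^ 2) *
          Real.sqrt (1 - ‖g‖ ^ 2) := by
  have habs : ∀ z : ℂ, (z * star z).re = ‖z‖ ^ 2 := by
    intro z
    simp [Complex.mul_re, Complex.sq_norm, Complex.normSq_apply]
  have h1 : 1 - (trace (dephJam f * dephJam f)).re = (1 - ‖f‖ ^ 2) / 2 := by
    rw [tr_deph, habs]; ring
  have h2 : 1 - (trace (dephJam g * dephJam g)).re = (1 - ‖g‖ ^ 2) / 2 := by
    rw [tr_deph, habs]; ring
  have hfa : 0 ≤ 1 - ‖f‖ ^ 2 := by nlinarith [norm_nonneg f]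
  have hga : 0 ≤ 1 - ‖g‖ ^ 2 := by nlinarith [norm_nonneg g]
  rw [sG, tr_deph, h1, h2, Real.sqrt_div hfa, Real.sqrt_div hga]
  have h2' : Real.sqrt 2 * Real.sqrt 2 = 2 := Real.mul_self_sqrt (by norm_num)
  have h2pos : (0:ℝ) < Real.sqrt 2 := Real.sqrt_pos.2 (by norm_num)
  field_simp
  rw [Real.sq_sqrt (by norm_num : (0:ℝ) ≤ 2)]; ring
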